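/- Let 1 ≤ p ≤ k and d ≥ 2 be integers, and let f₁, …, f_p : ℂ^k → ℂ be polynomials of degree at most d. Write f_j = f_j⁺ + g_j, where f_j⁺ is the homogeneous part of degree d of f_j and deg g_j ≤ d − 1. Write points of ℂ^k as z = (z', z'') ∈ ℂ^p × ℂ^{k−p}, and assume that every common zero of f₁⁺, …, f_p⁺ lies in {z' = 0}. Then there exists R₀ > 0 such that for every R ≥ R₀ and every z = (z', z'') with R/2 ≤ ‖z'‖ ≤ R and ‖z''‖ ≤ R, one has ‖(f₁(z), …, f_p(z))‖ > R. -/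

import Mathlib

open MvPolynomial

open Finset in
/-- Bound on evaluation of a polynomial with monomial degrees ≤ m. -/
lemma my_eval_bound {σ : Type*} [Fintype σ] (P : MvPolynomial σ ℂ) (m : ℕ)
    (hP : ∀ s ∈ P.support, Finsupp.degree s ≤ m) (z : σ → ℂ) (M : ℝ) (hM : 1 ≤ M)
    (hz : ∀ i, ‖z i‖ ≤ M) :
    ‖eval z P‖ ≤ (∑ s ∈ P.support, ‖coeff s P‖) * M ^ m := by
  rw [eval_eq]
  calc ‖∑ s ∈ P.support, coeff s P * ∏ i ∈ s.support, z i ^ s i‖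
      ≤ ∑ s ∈ P.support, ‖coeff s P * ∏ i ∈ s.support, z i ^ s i‖ := norm_sum_le _ _
    _ ≤ ∑ s ∈ P.support, ‖coeff s P‖ * M ^ m := ?_
    _ = (∑ s ∈ P.support, ‖coeff s P‖) * M ^ m := (Finset.sum_mul _ _ _).symm
  refine Finset.sum_le_sum fun s hs => ?_
  rw [norm_mul]
  refine mul_le_mul_of_nonneg_left ?_ (norm_nonneg _)
  calc ‖∏ i ∈ s.support, z i ^ s i‖ = ∏ i ∈ s.support, ‖z i‖ ^ s i := by
        simp [norm_prod, norm_pow]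
    _ ≤ ∏ i ∈ s.support, M ^ s i :=
        Finset.prod_le_prod (fun i _ => by positivity)
          (fun i _ => pow_le_pow_left₀ (norm_nonneg _) (hz i) _)
    _ = M ^ (Finsupp.degree s) := by
        rw [Finset.prod_pow_eq_pow_sum]; rfl
    _ ≤ M ^ m := pow_le_pow_right₀ hM (hP s hs)

/-- Scaling of a homogeneous polynomial. -/
lemma my_eval_scale {σ : Type*} (P : MvPolynomial σ ℂ) (n : ℕ) (hP : P.IsHomogeneous n)
    (c : ℂ) (z : σ → ℂ) :
    eval (fun i => c * z i) P = c ^ n * eval z P := by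
  rw [eval_eq, eval_eq, Finset.mul_sum]
  refine Finset.sum_congr rfl fun s hs => ?_
  have hdeg : ∑ i ∈ s.support, s i = n := by
    have h := hP (MvPolynomial.mem_support_iff.mp hs)
    rw [← h]
    have := DFunLike.congr_fun (Finsupp.degree_eq_weight_one (σ := σ)) s
    exact this
  have : ∏ i ∈ s.support, (c * z i) ^ s i = c ^ n * ∏ i ∈ s.support, z i ^ s i := by
    rw [← hdeg, ← Finset.prod_pow_eq_pow_sum, ← Finset.prod_mul_distrib]
    exact Finset.prod_congr rfl fun i _ => mul_pow _ _ _
  rw [this]; ring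

lemma my_coord_le_norm {n : ℕ} (x : EuclideanSpace ℂ (Fin n)) (i : Fin n) :
    ‖x i‖ ≤ ‖x‖ := by
  rw [EuclideanSpace.norm_eq]
  have h1 : ‖x i‖ ^ 2 ≤ ∑ j, ‖x j‖ ^ 2 :=
    Finset.single_le_sum (f := fun j => ‖x j‖ ^ 2) (fun j _ => by positivity)
      (Finset.mem_univ i)
  calc ‖x i‖ = Real.sqrt (‖x i‖ ^ 2) := (Real.sqrt_sq (norm_nonneg _)).symm
    _ ≤ _ := Real.sqrt_le_sqrt h1

lemma my_norm_le {n : ℕ} (v : EuclideanSpace ℂ (Fin n)) (B : ℝ) (hB : 0 ≤ B)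
    (h : ∀ j, ‖v j‖ ≤ B) : ‖v‖ ≤ Real.sqrt n * B := by
  rw [EuclideanSpace.norm_eq]
  have h1 : ∑ j, ‖v j‖ ^ 2 ≤ (n : ℝ) * B ^ 2 := by
    calc ∑ j, ‖v j‖ ^ 2 ≤ ∑ _j : Fin n, B ^ 2 :=
          Finset.sum_le_sum fun j _ => pow_le_pow_left₀ (norm_nonneg _) (h j) _
      _ = (n : ℝ) * B ^ 2 := by simp [Finset.sum_const, Finset.card_univ]
  calc Real.sqrt (∑ j, ‖v j‖ ^ 2) ≤ Real.sqrt ((n : ℝ) * B ^ 2) := Real.sqrt_le_sqrt h1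
    _ = Real.sqrt n * B := by
        rw [Real.sqrt_mul (by positivity), Real.sqrt_sq hB]

set_option maxHeartbeats 1000000 in
theorem stmt_1 (k p d : ℕ) (hp : 1 ≤ p) (hpk : p ≤ k) (hd : 2 ≤ d)
    (f : Fin p → MvPolynomial (Fin p ⊕ Fin (k - p)) ℂ)
    (hdeg : ∀ j, (f j).totalDegree ≤ d)
    (hzero : ∀ z : (Fin p ⊕ Fin (k - p)) → ℂ,
      (∀ j, eval z (homogeneousComponent d (f j)) = 0) → ∀ i : Fin p, z (Sum.inl i) = 0) :
    ∃ R₀ > 0, ∀ R : ℝ, R₀ ≤ R →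
      ∀ (z' : EuclideanSpace ℂ (Fin p)) (z'' : EuclideanSpace ℂ (Fin (k - p))),
        R / 2 ≤ ‖z'‖ → ‖z'‖ ≤ R → ‖z''‖ ≤ R →
        R < ‖(WithLp.equiv 2 ((j : Fin p) → ℂ)).symm (fun j =>
            eval (Sum.elim (WithLp.equiv 2 ((i : Fin p) → ℂ) z')
              (WithLp.equiv 2 ((i : Fin (k - p)) → ℂ) z'')) (f j))‖ := by
  classical
  set Fp : Fin p → MvPolynomial (Fin p ⊕ Fin (k - p)) ℂ := fun j => homogeneousComponent d (f j) with hFpdef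
  set G : Fin p → MvPolynomial (Fin p ⊕ Fin (k - p)) ℂ := fun j => f j - Fp j with hGdef
  have hFphom : ∀ j, (Fp j).IsHomogeneous d := fun j =>
    homogeneousComponent_isHomogeneous d (f j)
  -- degrees of the remainder
  have hGdeg : ∀ j, ∀ s ∈ (G j).support, Finsupp.degree s ≤ d - 1 := by
    intro j s hs
    rw [MvPolynomial.mem_support_iff] at hs
    have hcoeff : coeff s (G j) = coeff s (f j) - coeff s (Fp j) := by
      simp [hGdef, coeff_sub]
    by_cases hsd : Finsupp.degree s = d
    · exfalso
      apply hs
      rw [hcoeff, hFpdef]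
      simp [coeff_homogeneousComponent, hsd]
    · have hne : coeff s (f j) ≠ 0 := by
        intro h0
        apply hs
        rw [hcoeff, hFpdef]
        simp [coeff_homogeneousComponent, hsd, h0]
      have hle : Finsupp.degree s ≤ d := by
        have := MvPolynomial.le_totalDegree (p := f j) (MvPolynomial.mem_support_iff.mpr hne)
        calc Finsupp.degree s = s.sum fun _ e => e := by
              simp [Finsupp.degree, Finsupp.sum]
              rfl
          _ ≤ (f j).totalDegree := this
          _ ≤ d := hdeg j
      omega
  -- the embedding map
  set emb : EuclideanSpace ℂ (Fin p) × EuclideanSpace ℂ (Fin (k - p)) → ((Fin p ⊕ Fin (k - p)) → ℂ) := fun w =>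
    Sum.elim (WithLp.equiv 2 ((i : Fin p) → ℂ) w.1)
      (WithLp.equiv 2 ((i : Fin (k - p)) → ℂ) w.2) with hembdef
  have hembcont : Continuous emb := by
    refine continuous_pi fun i => ?_
    cases i with
    | inl i =>
        exact (continuous_apply i).comp ((PiLp.continuous_ofLp 2 _).comp continuous_fst)
    | inr i =>
        exact (continuous_apply i).comp ((PiLp.continuous_ofLp 2 _).comp continuous_snd)
  -- the function whose min we take
  set φ : EuclideanSpace ℂ (Fin p) × EuclideanSpace ℂ (Fin (k - p)) → ℝ := fun w =>
    ‖(WithLp.equiv 2 ((j : Fin p) → ℂ)).symm (fun j => eval (emb w) (Fp j))‖ with hφdef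
  have hφcont : Continuous φ := by
    apply Continuous.norm
    exact (PiLp.continuous_toLp 2 _).comp
      (continuous_pi fun j => (MvPolynomial.continuous_eval (p := Fp j)).comp hembcont)
  -- the compact set
  set K : Set (EuclideanSpace ℂ (Fin p) × EuclideanSpace ℂ (Fin (k - p))) := {w | 1/2 ≤ ‖w.1‖ ∧ ‖w.1‖ ≤ 1 ∧ ‖w.2‖ ≤ 1} with hKdef
  have hKclosed : IsClosed K := by
    have h1 : IsClosed {w : EuclideanSpace ℂ (Fin p) × EuclideanSpace ℂ (Fin (k - p)) | 1/2 ≤ ‖w.1‖} :=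
      isClosed_le continuous_const (continuous_fst.norm)
    have h2 : IsClosed {w : EuclideanSpace ℂ (Fin p) × EuclideanSpace ℂ (Fin (k - p)) | ‖w.1‖ ≤ 1} :=
      isClosed_le (continuous_fst.norm) continuous_const
    have h3 : IsClosed {w : EuclideanSpace ℂ (Fin p) × EuclideanSpace ℂ (Fin (k - p)) | ‖w.2‖ ≤ 1} :=
      isClosed_le (continuous_snd.norm) continuous_const
    exact (h1.inter (h2.inter h3))
  have hKbdd : Bornology.IsBounded K := by
    apply (Metric.isBounded_closedBall (x := (0 : EuclideanSpace ℂ (Fin p) × EuclideanSpace ℂ (Fin (k - p)))) (r := 1)).subset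
    intro w hw
    rw [Metric.mem_closedBall, dist_zero_right]
    rw [Prod.norm_def]
    exact max_le hw.2.1 hw.2.2
  have hKcomp : IsCompact K := Metric.isCompact_of_isClosed_isBounded hKclosed hKbdd
  have hKne : K.Nonempty := by
    refine ⟨(EuclideanSpace.single ⟨0, hp⟩ (1 : ℂ), 0), ?_, ?_, ?_⟩ <;>
      simp only [EuclideanSpace.norm_single, norm_one, norm_zero] <;> norm_num
  obtain ⟨w₀, hw₀K, hw₀min⟩ := hKcomp.exists_isMinOn hKne hφcont.continuousOn
  set c : ℝ := φ w₀ with hcdef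
  have hc0 : 0 < c := by
    rcases lt_or_eq_of_le (norm_nonneg _ : (0:ℝ) ≤ c) with h | h
    · exact h
    · exfalso
      have hnorm0 : φ w₀ = 0 := h.symm
      have hvec : (fun j => eval (emb w₀) (Fp j)) = 0 := by
        have := norm_eq_zero.mp hnorm0
        have h2 := congrArg (WithLp.equiv 2 ((j : Fin p) → ℂ)) this
        simpa using h2
      have hall : ∀ j, eval (emb w₀) (Fp j) = 0 := fun j => congrFun hvec j
      have hz1 : ∀ i : Fin p, (emb w₀) (Sum.inl i) = 0 := hzero _ hall
      have hw10 : w₀.1 = 0 := by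
        ext i
        exact hz1 i
      have hK1 := hw₀K.1
      rw [hw10, norm_zero] at hK1
      linarith
  -- the constant bounding the lower order terms
  set A : ℝ := ∑ j : Fin p, ∑ s ∈ (G j).support, ‖coeff s (G j)‖ with hAdef
  have hA0 : 0 ≤ A := Finset.sum_nonneg fun j _ => Finset.sum_nonneg fun s _ => norm_nonneg _
  have hAj : ∀ j : Fin p, ∑ s ∈ (G j).support, ‖coeff s (G j)‖ ≤ A :=
    fun j => Finset.single_le_sum
      (f := fun j => ∑ s ∈ (G j).support, ‖coeff s (G j)‖)
      (fun j _ => Finset.sum_nonneg fun s _ => norm_nonneg _) (Finset.mem_univ j)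
  set CA : ℝ := Real.sqrt p * A with hCAdef
  have hCA0 : 0 ≤ CA := mul_nonneg (Real.sqrt_nonneg _) hA0
  refine ⟨max 1 ((2 + CA) / c), lt_of_lt_of_le one_pos (le_max_left _ _), ?_⟩
  intro R hR z' z'' hz1 hz2 hz3
  have hR1 : (1 : ℝ) ≤ R := le_trans (le_max_left _ _) hR
  have hR0 : (0 : ℝ) < R := lt_of_lt_of_le one_pos hR1
  have hRC : (2 + CA) / c ≤ R := le_trans (le_max_right _ _) hR
  have hRc : 2 + CA ≤ c * R := by
    rw [div_le_iff₀ hc0] at hRC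
    linarith [hRC]
  -- the rescaled point
  set w : EuclideanSpace ℂ (Fin p) × EuclideanSpace ℂ (Fin (k - p)) := ((R : ℂ)⁻¹ • z', (R : ℂ)⁻¹ • z'') with hwdef
  have hRCnorm : ‖(R : ℂ)⁻¹‖ = R⁻¹ := by
    rw [norm_inv, Complex.norm_real, Real.norm_of_nonneg hR0.le]
  have hw1 : ‖w.1‖ = R⁻¹ * ‖z'‖ := by
    rw [hwdef]
    simp only [norm_smul, hRCnorm]
  have hw2 : ‖w.2‖ = R⁻¹ * ‖z''‖ := by
    rw [hwdef]
    simp only [norm_smul, hRCnorm]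
  have hwK : w ∈ K := by
    refine ⟨?_, ?_, ?_⟩
    · rw [hw1]
      calc (1:ℝ)/2 = R⁻¹ * (R / 2) := by field_simp
        _ ≤ R⁻¹ * ‖z'‖ := by
            exact mul_le_mul_of_nonneg_left hz1 (inv_nonneg.mpr hR0.le)
    · rw [hw1]
      calc R⁻¹ * ‖z'‖ ≤ R⁻¹ * R := mul_le_mul_of_nonneg_left hz2 (inv_nonneg.mpr hR0.le)
        _ = 1 := inv_mul_cancel₀ hR0.ne'
    · rw [hw2]
      calc R⁻¹ * ‖z''‖ ≤ R⁻¹ * R := mul_le_mul_of_nonneg_left hz3 (inv_nonneg.mpr hR0.le)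
        _ = 1 := inv_mul_cancel₀ hR0.ne'
  -- relation between emb z and emb w
  set zfun : (Fin p ⊕ Fin (k - p)) → ℂ := Sum.elim (WithLp.equiv 2 ((i : Fin p) → ℂ) z')
      (WithLp.equiv 2 ((i : Fin (k - p)) → ℂ) z'') with hzfundef
  have hembw : zfun = fun i => (R : ℂ) * emb w i := by
    funext i
    have hRne : (R : ℂ) ≠ 0 := by
      simp only [ne_eq, Complex.ofReal_eq_zero]
      exact hR0.ne'
    cases i with
    | inl i =>
        show z' i = (R : ℂ) * ((R : ℂ)⁻¹ • z') i
        simp [smul_eq_mul, ← mul_assoc, mul_inv_cancel₀ hRne]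
    | inr i =>
        show z'' i = (R : ℂ) * ((R : ℂ)⁻¹ • z'') i
        simp [smul_eq_mul, ← mul_assoc, mul_inv_cancel₀ hRne]
  -- coordinates of zfun bounded by R
  have hzfbd : ∀ i, ‖zfun i‖ ≤ R := by
    intro i
    cases i with
    | inl i =>
        calc ‖zfun (Sum.inl i)‖ = ‖z' i‖ := rfl
          _ ≤ ‖z'‖ := my_coord_le_norm z' i
          _ ≤ R := hz2
    | inr i =>
        calc ‖zfun (Sum.inr i)‖ = ‖z'' i‖ := rfl
          _ ≤ ‖z''‖ := my_coord_le_norm z'' i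
          _ ≤ R := hz3
  -- the three vectors
  set Fvec : EuclideanSpace ℂ (Fin p) :=
    (WithLp.equiv 2 ((j : Fin p) → ℂ)).symm (fun j => eval zfun (f j)) with hFvecdef
  set Pvec : EuclideanSpace ℂ (Fin p) :=
    (WithLp.equiv 2 ((j : Fin p) → ℂ)).symm (fun j => eval zfun (Fp j)) with hPvecdef
  -- norm of Pvec
  have hPvec_eq : ∀ j : Fin p, eval zfun (Fp j) = (R : ℂ) ^ d * eval (emb w) (Fp j) := by
    intro j
    rw [hembw]
    exact my_eval_scale (Fp j) d (hFphom j) _ _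
  have hPvecnorm : ‖Pvec‖ = R ^ d * φ w := by
    have : Pvec = ((R : ℂ) ^ d) •
        ((WithLp.equiv 2 ((j : Fin p) → ℂ)).symm (fun j => eval (emb w) (Fp j))) := by
      rw [hPvecdef]
      ext j
      simp [hPvec_eq j]
    rw [this, norm_smul]
    congr 1
    rw [norm_pow, Complex.norm_real, Real.norm_of_nonneg hR0.le]
  have hφw : c ≤ φ w := hw₀min hwK
  -- bound on the difference
  have hdiff : ‖Pvec - Fvec‖ ≤ CA * R ^ (d - 1) := by
    have hcomp : ∀ j : Fin p, ‖(Pvec - Fvec) j‖ ≤ A * R ^ (d - 1) := by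
      intro j
      have h1 : (Pvec - Fvec) j = eval zfun (Fp j) - eval zfun (f j) := by
        simp [hPvecdef, hFvecdef]
      have h2 : eval zfun (Fp j) - eval zfun (f j) = - eval zfun (G j) := by
        rw [hGdef]
        simp [map_sub]
      rw [h1, h2, norm_neg]
      calc ‖eval zfun (G j)‖
          ≤ (∑ s ∈ (G j).support, ‖coeff s (G j)‖) * R ^ (d - 1) :=
            my_eval_bound (G j) (d - 1) (hGdeg j) zfun R hR1 hzfbd
        _ ≤ A * R ^ (d - 1) :=
            mul_le_mul_of_nonneg_right (hAj j) (pow_nonneg hR0.le _)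
    calc ‖Pvec - Fvec‖ ≤ Real.sqrt p * (A * R ^ (d - 1)) :=
          my_norm_le _ _ (mul_nonneg hA0 (pow_nonneg hR0.le _)) hcomp
      _ = CA * R ^ (d - 1) := by rw [hCAdef]; ring
  -- put it together
  have hlow : R ^ d * c - CA * R ^ (d - 1) ≤ ‖Fvec‖ := by
    have h1 : ‖Pvec‖ - ‖Pvec - Fvec‖ ≤ ‖Fvec‖ := by
      have := norm_sub_norm_le Pvec Fvec
      linarith
    have h2 : R ^ d * c ≤ ‖Pvec‖ := by
      rw [hPvecnorm]
      exact mul_le_mul_of_nonneg_left hφw (pow_nonneg hR0.le _)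
    linarith
  have hfinal : R < R ^ d * c - CA * R ^ (d - 1) := by
    have hpow : R ^ d = R ^ (d - 1) * R := by
      conv_lhs => rw [show d = (d - 1) + 1 by omega]
      rw [pow_succ]
    have hRd1 : R ≤ R ^ (d - 1) := by
      calc R = R ^ 1 := (pow_one R).symm
        _ ≤ R ^ (d - 1) := pow_le_pow_right₀ hR1 (by omega)
    calc R = R * 1 := (mul_one R).symm
      _ < R * 2 := by linarith
      _ ≤ R ^ (d - 1) * 2 := by nlinarith
      _ ≤ R ^ (d - 1) * (c * R - CA) := by
          apply mul_le_mul_of_nonneg_left _ (pow_nonneg hR0.le _)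
          linarith
      _ = R ^ d * c - CA * R ^ (d - 1) := by rw [hpow]; ring
  exact lt_of_lt_of_le hfinal hlow
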